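/- Let (α,β) be a point of the topological interior of △ with finite triangle sequence [α₀,…,α_k], and let ξ ∈ (0,1) be the unique number with (α,β) = φ₁^{α₀}φ₀ ⋯ φ₁^{α_k}φ₀ φ₂(ξ,ξ). Then ξ is rational if and only if both α and β are rational. -/

import Mathlib

noncomputable def phi0 (p : ℝ × ℝ) : ℝ × ℝ := (1 / (1 + p.2), p.1 / (1 + p.2))
noncomputable def phi1 (p : ℝ × ℝ) : ℝ × ℝ := (p.1 / (1 + p.2), p.2 / (1 + p.2))
def phi2 (p : ℝ × ℝ) : ℝ × ℝ := (p.1, 0)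

/-- The open triangle △ = {(x,y) : 1 ≥ x ≥ y > 0}. -/
def tri : Set (ℝ × ℝ) := {p | 1 ≥ p.1 ∧ p.1 ≥ p.2 ∧ p.2 > 0}

/-- The subtriangle △_k. -/
def triK (k : ℕ) : Set (ℝ × ℝ) :=
  {p | p ∈ tri ∧ 1 - p.1 - (k : ℝ) * p.2 ≥ 0 ∧ 1 - p.1 - ((k : ℝ) + 1) * p.2 < 0}

/-- Λ = {(x,0) : 0 ≤ x ≤ 1}. -/
def LambdaSet : Set (ℝ × ℝ) := {p | 0 ≤ p.1 ∧ p.1 ≤ 1 ∧ p.2 = 0}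

/-- The Triangle map `T(x,y) = (y/x, (1-x-ky)/x)` for `(x,y) ∈ △_k`; the index `k`
is recovered as `⌊(1-x)/y⌋`. -/
noncomputable def Tmap (p : ℝ × ℝ) : ℝ × ℝ :=
  (p.2 / p.1, (1 - p.1 - (⌊(1 - p.1) / p.2⌋ : ℝ) * p.2) / p.1)

/-- The composition φ₁^{α₀} φ₀ ⋯ φ₁^{α_k} φ₀. -/
noncomputable def compPhi (a : ℕ → ℕ) : ℕ → (ℝ × ℝ → ℝ × ℝ)
  | 0 => phi1^[a 0] ∘ phi0
  | k + 1 => compPhi a k ∘ (phi1^[a (k + 1)] ∘ phi0)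

/-- Invariant: both coordinates in [0,1]. -/
def invP (p : ℝ × ℝ) : Prop := 0 ≤ p.1 ∧ p.1 ≤ 1 ∧ 0 ≤ p.2 ∧ p.2 ≤ 1

/-- Both coordinates rational. -/
def ratP (p : ℝ × ℝ) : Prop := (∃ m : ℚ, (m : ℝ) = p.1) ∧ (∃ m : ℚ, (m : ℝ) = p.2)

lemma phi0_step {p : ℝ × ℝ} (h : invP p) :
    invP (phi0 p) ∧ (ratP (phi0 p) ↔ ratP p) := by
  obtain ⟨h1, h2, h3, h4⟩ := h
  have hd : (0 : ℝ) < 1 + p.2 := by linarith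
  constructor
  · simp only [invP, phi0]
    refine ⟨by positivity, ?_, by positivity, ?_⟩ <;>
      · rw [div_le_one hd]; linarith
  constructor
  · rintro ⟨⟨u, hu⟩, ⟨v, hv⟩⟩
    simp only [phi0] at hu hv
    have hune : (u : ℝ) ≠ 0 := by rw [hu]; positivity
    refine ⟨⟨v / u, ?_⟩, ⟨1 / u - 1, ?_⟩⟩
    · push_cast
      rw [hu, hv]
      field_simp
    · push_cast
      rw [hu]
      field_simp; ring
  · rintro ⟨⟨u, hu⟩, ⟨v, hv⟩⟩
    refine ⟨⟨1 / (1 + v), ?_⟩, ⟨u / (1 + v), ?_⟩⟩ <;>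
      · simp only [phi0]
        push_cast
        simp only [hu, hv]

lemma phi1_step {p : ℝ × ℝ} (h : invP p) :
    invP (phi1 p) ∧ (ratP (phi1 p) ↔ ratP p) := by
  obtain ⟨h1, h2, h3, h4⟩ := h
  have hd : (0 : ℝ) < 1 + p.2 := by linarith
  constructor
  · simp only [invP, phi1]
    refine ⟨by positivity, ?_, by positivity, ?_⟩ <;>
      · rw [div_le_one hd]; linarith
  constructor
  · rintro ⟨⟨u, hu⟩, ⟨v, hv⟩⟩
    simp only [phi1] at hu hv
    have hvne : (1 : ℝ) - v ≠ 0 := by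
      rw [hv]
      have : 1 - p.2 / (1 + p.2) = 1 / (1 + p.2) := by field_simp; ring
      rw [this]; positivity
    refine ⟨⟨u / (1 - v), ?_⟩, ⟨v / (1 - v), ?_⟩⟩
    · push_cast
      rw [hu, hv]
      field_simp; ring
    · push_cast
      rw [hv]
      field_simp; ring
  · rintro ⟨⟨u, hu⟩, ⟨v, hv⟩⟩
    refine ⟨⟨u / (1 + v), ?_⟩, ⟨v / (1 + v), ?_⟩⟩ <;>
      · simp only [phi1]
        push_cast
        simp only [hu, hv]

lemma phi1_iter_step (n : ℕ) {p : ℝ × ℝ} (h : invP p) :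
    invP (phi1^[n] p) ∧ (ratP (phi1^[n] p) ↔ ratP p) := by
  induction n with
  | zero => exact ⟨h, Iff.rfl⟩
  | succ n ih =>
    rw [Function.iterate_succ_apply']
    exact ⟨(phi1_step ih.1).1, (phi1_step ih.1).2.trans ih.2⟩

lemma compPhi_step (a : ℕ → ℕ) (k : ℕ) {p : ℝ × ℝ} (h : invP p) :
    invP (compPhi a k p) ∧ (ratP (compPhi a k p) ↔ ratP p) := by
  induction k generalizing p with
  | zero =>
    have h0 := phi0_step h
    have h1 := phi1_iter_step (a 0) h0.1
    exact ⟨h1.1, h1.2.trans h0.2⟩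
  | succ k ih =>
    have h0 := phi0_step h
    have h1 := phi1_iter_step (a (k + 1)) h0.1
    have h2 := ih h1.1
    exact ⟨h2.1, h2.2.trans (h1.2.trans h0.2)⟩

/-- with (α,β) an interior point of △ of finite triangle sequence
[α₀,…,α_k] and ξ ∈ (0,1) the unique number with (α,β) = φ₁^{α₀}φ₀⋯φ₁^{α_k}φ₀φ₂(ξ,ξ),
ξ is rational iff both α and β are rational. -/
theorem xi_rational_iff (a : ℕ → ℕ) (k : ℕ) (z : ℝ × ℝ)
    (hint : z ∈ interior tri)
    (hts : ∀ j ≤ k, Tmap^[j] z ∈ triK (a j))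
    (hlast : Tmap^[k + 1] z ∈ LambdaSet)
    (ξ : ℝ) (hξ : ξ ∈ Set.Ioo (0 : ℝ) 1)
    (heq : z = compPhi a k (phi2 (ξ, ξ))) :
    (∃ m : ℚ, (m : ℝ) = ξ) ↔ ((∃ m : ℚ, (m : ℝ) = z.1) ∧ (∃ m : ℚ, (m : ℝ) = z.2)) := by
  obtain ⟨hξ0, hξ1⟩ := hξ
  have hinv : invP (phi2 (ξ, ξ)) := ⟨le_of_lt hξ0, le_of_lt hξ1, le_refl 0, zero_le_one⟩
  have key := compPhi_step a k hinv
  have hz : ratP z ↔ ratP (phi2 (ξ, ξ)) := by rw [heq]; exact key.2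
  have hr : ratP (phi2 (ξ, ξ)) ↔ (∃ m : ℚ, (m : ℝ) = ξ) := by
    constructor
    · rintro ⟨hm, _⟩; exact hm
    · rintro hm; exact ⟨hm, ⟨0, by simp [phi2]⟩⟩
  rw [← hr, ← hz]
  exact Iff.rfl
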